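/- With the same notation, the centralizer g^f of F in gl(V) decomposes as the direct sum g^f = ⊕_{h,k=0}^{p_1−1} ⊕_{ℓ=0}^{min(h,k)} φ_ℓ(g_0^f(h,k)). -/

import Mathlib

/-- A "box" of the pyramid attached to the partition `p₁^{r₁} ⋯ p_s^{r_s}`. The last
coordinate is the position of the box in its row, counted from the right
(`0` = rightmost box). -/
abbrev PyramidBox {s : ℕ} (p r : Fin s → ℕ) : Type := (i : Fin s) × (Fin (r i) × Fin (p i))

/-- The linear map `φ_ℓ : End V → End V`, `φ_ℓ(A) = ∑_{i=0}^{ℓ} F^i (Fᵗ)^ℓ A (Fᵗ)^ℓ F^{ℓ-i}`. -/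
noncomputable def phiMap {K : Type*} [Field K] {V : Type*} [AddCommGroup V] [Module K V]
    (F Ft : Module.End K V) (ℓ : ℕ) : Module.End K V →ₗ[K] Module.End K V :=
  ∑ i ∈ Finset.range (ℓ + 1),
    (LinearMap.mulLeft K (F ^ i * Ft ^ ℓ)).comp (LinearMap.mulRight K (Ft ^ ℓ * F ^ (ℓ - i)))

/-- The subspace `g₀^f(h,k) = Hom(V₊ ∩ (Fᵗ)^h V₋, V₋ ∩ F^k V₊)` of `End V`, realized as
`{A | Qm * A * Qp = A}` where `Qm`, `Qp` are the projections onto the two subspaces. -/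
noncomputable def gfZeroPiece {K : Type*} [Field K] {V : Type*} [AddCommGroup V] [Module K V]
    (Qm Qp : Module.End K V) : Submodule K (Module.End K V) :=
  LinearMap.ker ((LinearMap.mulLeft K Qm).comp (LinearMap.mulRight K Qp) - LinearMap.id)

section Aux
variable {K : Type*} [Field K] {V : Type*} [AddCommGroup V] [Module K V]
  {s : ℕ} {p r : Fin s → ℕ} (b : Module.Basis (PyramidBox p r) K V)
  (F Ft : Module.End K V) (Qplus Qminus : ℕ → Module.End K V)

theorem aux_bcongr {i : Fin s} (j : Fin (r i)) {m m' : ℕ} (hm : m < p i) (hm' : m' < p i)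
    (h : m = m') : b ⟨i, j, ⟨m, hm⟩⟩ = b ⟨i, j, ⟨m', hm'⟩⟩ := by subst h; rfl

theorem aux_Fpow
    (hF : ∀ x : PyramidBox p r,
      F (b x) = if h : (x.2.2 : ℕ) + 1 < p x.1
        then b ⟨x.1, x.2.1, ⟨(x.2.2 : ℕ) + 1, h⟩⟩ else 0)
    (a : ℕ) (x : PyramidBox p r) :
    (F ^ a) (b x) = if h : (x.2.2 : ℕ) + a < p x.1
      then b ⟨x.1, x.2.1, ⟨(x.2.2 : ℕ) + a, h⟩⟩ else 0 := by
  obtain ⟨i, j, m⟩ := x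
  induction a generalizing m with
  | zero =>
      simp only [pow_zero, Module.End.one_apply]
      rw [dif_pos (by omega : (m : ℕ) + 0 < p i)]
      exact aux_bcongr b j m.isLt _ (by omega)
  | succ a ih =>
      rw [pow_succ, Module.End.mul_apply, hF]
      dsimp only
      by_cases hc : (m : ℕ) + 1 < p i
      · rw [dif_pos hc, ih]
        dsimp only
        by_cases hc2 : (m : ℕ) + 1 + a < p i
        · rw [dif_pos hc2, dif_pos (by omega : (m : ℕ) + (a + 1) < p i)]
          exact aux_bcongr b j _ _ (by omega)
        · rw [dif_neg hc2, dif_neg (by omega)]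
      · rw [dif_neg hc, map_zero, dif_neg (by omega)]

theorem aux_Ftpow
    (hFt : ∀ x : PyramidBox p r,
      Ft (b x) = if 0 < (x.2.2 : ℕ)
        then b ⟨x.1, x.2.1, ⟨(x.2.2 : ℕ) - 1, Nat.lt_of_le_of_lt (Nat.sub_le _ _) x.2.2.isLt⟩⟩
        else 0)
    (a : ℕ) (x : PyramidBox p r) :
    (Ft ^ a) (b x) = if a ≤ (x.2.2 : ℕ)
      then b ⟨x.1, x.2.1, ⟨(x.2.2 : ℕ) - a,
        Nat.lt_of_le_of_lt (Nat.sub_le _ _) x.2.2.isLt⟩⟩ else 0 := by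
  obtain ⟨i, j, m⟩ := x
  induction a generalizing m with
  | zero =>
      simp only [pow_zero, Module.End.one_apply]
      rw [if_pos (by omega : 0 ≤ (m : ℕ))]
      exact aux_bcongr b j m.isLt _ (by omega)
  | succ a ih =>
      rw [pow_succ, Module.End.mul_apply, hFt]
      dsimp only
      by_cases hc : 0 < (m : ℕ)
      · rw [if_pos hc, ih]
        dsimp only
        by_cases hc2 : a ≤ (m : ℕ) - 1
        · rw [if_pos hc2, if_pos (by omega : a + 1 ≤ (m : ℕ))]
          exact aux_bcongr b j _ _ (by omega)
        · rw [if_neg hc2, if_neg (by omega)]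
      · rw [if_neg hc, map_zero, if_neg (by omega)]

variable
    (hF : ∀ x : PyramidBox p r,
      F (b x) = if h : (x.2.2 : ℕ) + 1 < p x.1
        then b ⟨x.1, x.2.1, ⟨(x.2.2 : ℕ) + 1, h⟩⟩ else 0)
    (hFt : ∀ x : PyramidBox p r,
      Ft (b x) = if 0 < (x.2.2 : ℕ)
        then b ⟨x.1, x.2.1, ⟨(x.2.2 : ℕ) - 1, Nat.lt_of_le_of_lt (Nat.sub_le _ _) x.2.2.isLt⟩⟩
        else 0)
    (hQplus : ∀ (n : ℕ) (x : PyramidBox p r),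
      Qplus n (b x) = if ((x.2.2 : ℕ) = 0 ∧ p x.1 = n + 1) then b x else 0)
    (hQminus : ∀ (n : ℕ) (x : PyramidBox p r),
      Qminus n (b x) = if ((x.2.2 : ℕ) + 1 = p x.1 ∧ p x.1 = n + 1) then b x else 0)

include hF hFt hQminus in
theorem aux_O2 {a ℓ k : ℕ} (h1 : ℓ ≤ k) (h2 : ℓ < a) (z : V) :
    (F ^ a) ((Ft ^ ℓ) (Qminus k z)) = 0 := by
  have : (F ^ a) ∘ₗ ((Ft ^ ℓ) ∘ₗ Qminus k) = 0 := by
    apply Module.Basis.ext b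
    intro x
    obtain ⟨i, j, m⟩ := x
    simp only [LinearMap.comp_apply, LinearMap.zero_apply]
    rw [hQminus]
    dsimp only
    by_cases hq : ((m : ℕ) + 1 = p i ∧ p i = k + 1)
    · rw [if_pos hq, aux_Ftpow b Ft hFt]
      dsimp only
      rw [if_pos (by omega : ℓ ≤ (m : ℕ)), aux_Fpow b F hF]
      dsimp only
      rw [dif_neg (by omega)]
    · rw [if_neg hq, map_zero, map_zero]
  simpa using DFunLike.congr_fun this z

include hF hFt hQminus in
theorem aux_O1 {k₂ ℓ₂ ℓ₁ k₁ : ℕ} (h1 : ℓ₁ ≤ k₁) (z : V) :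
    Qminus k₂ ((F ^ ℓ₂) ((Ft ^ ℓ₁) (Qminus k₁ z))) =
      if (k₂ = k₁ ∧ ℓ₂ = ℓ₁) then Qminus k₁ z else 0 := by
  have : Qminus k₂ ∘ₗ ((F ^ ℓ₂) ∘ₗ ((Ft ^ ℓ₁) ∘ₗ Qminus k₁)) =
      if (k₂ = k₁ ∧ ℓ₂ = ℓ₁) then Qminus k₁ else 0 := by
    apply Module.Basis.ext b
    intro x
    obtain ⟨i, j, m⟩ := x
    simp only [LinearMap.comp_apply]
    rw [apply_ite (fun g : Module.End K V => g (b ⟨i, j, m⟩)), LinearMap.zero_apply]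
    rw [hQminus]
    dsimp only
    by_cases hq : ((m : ℕ) + 1 = p i ∧ p i = k₁ + 1)
    · rw [if_pos hq, aux_Ftpow b Ft hFt]
      dsimp only
      rw [if_pos (by omega : ℓ₁ ≤ (m : ℕ)), aux_Fpow b F hF]
      dsimp only
      by_cases hc : (m : ℕ) - ℓ₁ + ℓ₂ < p i
      · rw [dif_pos hc, hQminus]
        dsimp only
        by_cases hc2 : (k₂ = k₁ ∧ ℓ₂ = ℓ₁)
        · rw [if_pos (by omega), if_pos hc2]
          exact aux_bcongr b j _ _ (by omega)
        · rw [if_neg (by omega), if_neg hc2]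
      · rw [dif_neg hc, map_zero, if_neg (by omega)]
    · rw [if_neg hq, map_zero, map_zero, map_zero]
      split_ifs <;> rfl
  have h2 := DFunLike.congr_fun this z
  simp only [LinearMap.comp_apply] at h2
  rw [h2, apply_ite (fun g : Module.End K V => g z), LinearMap.zero_apply]

include hQminus in
theorem aux_QmQm (k : ℕ) : Qminus k * Qminus k = Qminus k := by
  apply Module.Basis.ext b
  intro x
  rw [Module.End.mul_apply, hQminus]
  by_cases hq : ((x.2.2 : ℕ) + 1 = p x.1 ∧ p x.1 = k + 1)
  · rw [if_pos hq, hQminus, if_pos hq]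
  · rw [if_neg hq, map_zero]

include hQplus in
theorem aux_QpQp (h : ℕ) : Qplus h * Qplus h = Qplus h := by
  apply Module.Basis.ext b
  intro x
  rw [Module.End.mul_apply, hQplus]
  by_cases hq : ((x.2.2 : ℕ) = 0 ∧ p x.1 = h + 1)
  · rw [if_pos hq, hQplus, if_pos hq]
  · rw [if_neg hq, map_zero]

include hF hFt hQminus in
theorem aux_I (hs : 0 < s) (hp : StrictAnti p) (hp0 : ∀ i, 0 < p i) (z : V) :
    ∑ k ∈ Finset.range (p ⟨0, hs⟩), ∑ ℓ ∈ Finset.range (k + 1),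
      (Ft ^ ℓ) (Qminus k ((F ^ ℓ) z)) = z := by
  have key : ∑ k ∈ Finset.range (p ⟨0, hs⟩), ∑ ℓ ∈ Finset.range (k + 1),
      ((Ft ^ ℓ) ∘ₗ (Qminus k ∘ₗ (F ^ ℓ))) = (LinearMap.id : V →ₗ[K] V) := by
    apply Module.Basis.ext b
    intro x
    obtain ⟨i, j, m⟩ := x
    simp only [LinearMap.sum_apply, LinearMap.comp_apply, LinearMap.id_apply]
    have hple : p i ≤ p ⟨0, hs⟩ := hp.antitone (by simp [Fin.le_def])
    have hterm : ∀ k ∈ Finset.range (p ⟨0, hs⟩), ∀ ℓ ∈ Finset.range (k + 1),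
        (Ft ^ ℓ) (Qminus k ((F ^ ℓ) (b ⟨i, j, m⟩))) =
          if k = p i - 1 then (if ℓ = p i - 1 - (m : ℕ) then b ⟨i, j, m⟩ else 0) else 0 := by
      intro k hk ℓ hℓ
      rw [Finset.mem_range] at hk hℓ
      rw [aux_Fpow b F hF]
      dsimp only
      by_cases hc1 : (m : ℕ) + ℓ < p i
      · rw [dif_pos hc1, hQminus]
        dsimp only
        by_cases hc2 : ((m : ℕ) + ℓ + 1 = p i ∧ p i = k + 1)
        · rw [if_pos hc2, aux_Ftpow b Ft hFt]
          dsimp only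
          rw [if_pos (by omega), if_pos (by omega), if_pos (by omega)]
          exact aux_bcongr b j _ _ (by omega)
        · rw [if_neg hc2, map_zero]
          have h0 := hp0 i
          split_ifs <;> first | rfl | omega
      · rw [dif_neg hc1, map_zero, map_zero]
        have h0 := hp0 i
        split_ifs <;> first | rfl | omega
    rw [Finset.sum_congr rfl (fun k hk => Finset.sum_congr rfl (hterm k hk))]
    have hsum : ∀ k ∈ Finset.range (p ⟨0, hs⟩),
        (∑ ℓ ∈ Finset.range (k + 1),
          if k = p i - 1 then (if ℓ = p i - 1 - (m : ℕ) then b ⟨i, j, m⟩ else 0) else 0) =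
        if k = p i - 1 then b ⟨i, j, m⟩ else 0 := by
      intro k hk
      by_cases hkc : k = p i - 1
      · simp only [if_pos hkc]
        rw [Finset.sum_ite_eq' (Finset.range (k + 1)) _ (fun _ => b ⟨i, j, m⟩)]
        rw [if_pos (Finset.mem_range.2 (by omega))]
      · simp only [if_neg hkc, Finset.sum_const_zero]
    rw [Finset.sum_congr rfl hsum,
      Finset.sum_ite_eq' (Finset.range (p ⟨0, hs⟩)) _ (fun _ => b ⟨i, j, m⟩)]
    have h0 := hp0 i
    rw [if_pos (Finset.mem_range.2 (by omega))]
  have h2 := DFunLike.congr_fun key z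
  simpa only [LinearMap.sum_apply, LinearMap.comp_apply, LinearMap.id_apply] using h2

include hF hFt hQminus in
theorem aux_Ih (hs : 0 < s) (hp : StrictAnti p) (hp0 : ∀ i, 0 < p i) (h : ℕ) (z : V)
    (hz : (F ^ (h + 1)) z = 0) :
    ∑ k ∈ Finset.range (p ⟨0, hs⟩), ∑ ℓ ∈ Finset.range (min h k + 1),
      (Ft ^ ℓ) (Qminus k ((F ^ ℓ) z)) = z := by
  conv_rhs => rw [← aux_I b F Ft Qminus hF hFt hQminus hs hp hp0 z]
  apply Finset.sum_congr rfl
  intro k hk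
  apply Finset.sum_subset
  · intro ℓ hℓ
    rw [Finset.mem_range] at *
    omega
  · intro ℓ hℓ hℓ'
    rw [Finset.mem_range] at hℓ hℓ'
    have hz2 : (F ^ ℓ) z = 0 := by
      have he : F ^ ℓ = F ^ (ℓ - (h + 1)) * F ^ (h + 1) := by
        rw [← pow_add]
        congr 1
        omega
      rw [he, Module.End.mul_apply, hz, map_zero]
    rw [hz2, map_zero, map_zero]

include hF hFt hQplus hQminus in
theorem aux_phi {h k ℓ : ℕ} (hℓh : ℓ ≤ h) (hℓk : ℓ ≤ k) {A : Module.End K V}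
    (hA : Qminus k * A * Qplus h = A) (x : PyramidBox p r) :
    phiMap F Ft ℓ A (b x) =
      if p x.1 = h + 1 then
        (F ^ (x.2.2 : ℕ)) ((Ft ^ ℓ) (A (b ⟨x.1, x.2.1, ⟨0, x.2.2.pos⟩⟩))) else 0 := by
  obtain ⟨i, j, m⟩ := x
  dsimp only
  have hpt : ∀ y : V, A y = Qminus k (A (Qplus h y)) := by
    intro y
    conv_lhs => rw [← hA]
    rfl
  rw [phiMap]
  simp only [LinearMap.sum_apply, LinearMap.comp_apply, LinearMap.mulLeft_apply,
    LinearMap.mulRight_apply, Module.End.mul_apply]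
  have hterm : ∀ i' ∈ Finset.range (ℓ + 1),
      (F ^ i') ((Ft ^ ℓ) (A ((Ft ^ ℓ) ((F ^ (ℓ - i')) (b ⟨i, j, m⟩))))) =
        if (i' = (m : ℕ) ∧ p i = h + 1) then
          (F ^ (m : ℕ)) ((Ft ^ ℓ) (A (b ⟨i, j, ⟨0, m.pos⟩⟩))) else 0 := by
    intro i' hi'
    rw [Finset.mem_range] at hi'
    rw [aux_Fpow b F hF]
    dsimp only
    by_cases hc1 : (m : ℕ) + (ℓ - i') < p i
    · rw [dif_pos hc1, aux_Ftpow b Ft hFt]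
      dsimp only
      by_cases hc2 : ℓ ≤ (m : ℕ) + (ℓ - i')
      · rw [if_pos hc2, hpt, hQplus]
        dsimp only
        by_cases hc3 : ((m : ℕ) + (ℓ - i') - ℓ = 0 ∧ p i = h + 1)
        · rw [if_pos hc3, if_pos (⟨by omega, hc3.2⟩ : (i' = (m : ℕ) ∧ p i = h + 1))]
          have him : i' = (m : ℕ) := by omega
          rw [aux_bcongr b j _ m.pos (show (m : ℕ) + (ℓ - i') - ℓ = 0 by omega)]
          conv_rhs => rw [hpt, hQplus]
          rw [if_pos (show ((⟨0, m.pos⟩ : Fin (p i)) : ℕ) = 0 ∧ p i = h + 1 from ⟨rfl, hc3.2⟩),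
            him]
        · rw [if_neg hc3, map_zero, map_zero, map_zero, map_zero,
            if_neg (by rintro ⟨h1', h2'⟩; exact hc3 ⟨by omega, h2'⟩)]
      · rw [if_neg hc2, map_zero, map_zero, map_zero,
          if_neg (by rintro ⟨h1', h2'⟩; exact hc2 (by omega))]
    · rw [dif_neg hc1, map_zero, map_zero, map_zero, map_zero,
        if_neg (by rintro ⟨h1', h2'⟩; exact hc1 (by omega))]
  rw [Finset.sum_congr rfl hterm]
  simp only [ite_and]
  rw [Finset.sum_ite_eq' (Finset.range (ℓ + 1)) _
    (fun _ => if p i = h + 1 then (F ^ (m : ℕ)) ((Ft ^ ℓ) (A (b ⟨i, j, ⟨0, m.pos⟩⟩))) else 0)]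
  by_cases hm : (m : ℕ) < ℓ + 1
  · rw [if_pos (Finset.mem_range.2 hm)]
  · rw [if_neg (fun hc => hm (Finset.mem_range.1 hc))]
    by_cases hP : p i = h + 1
    · rw [if_pos hP]
      symm
      rw [hpt]
      exact aux_O2 b F Ft Qminus hF hFt hQminus hℓk (by omega) _
    · rw [if_neg hP]

include hF hFt hQplus hQminus in
theorem aux_comm {h k ℓ : ℕ} (hℓh : ℓ ≤ h) (hℓk : ℓ ≤ k) {A : Module.End K V}
    (hA : Qminus k * A * Qplus h = A) :
    F * phiMap F Ft ℓ A = phiMap F Ft ℓ A * F := by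
  have hpt : ∀ y : V, A y = Qminus k (A (Qplus h y)) := by
    intro y
    conv_lhs => rw [← hA]
    rfl
  apply Module.Basis.ext b
  intro x
  obtain ⟨i, j, m⟩ := x
  rw [Module.End.mul_apply, Module.End.mul_apply,
    aux_phi b F Ft Qplus Qminus hF hFt hQplus hQminus hℓh hℓk hA, hF]
  dsimp only
  by_cases hP : p i = h + 1
  · rw [if_pos hP]
    by_cases hc : (m : ℕ) + 1 < p i
    · rw [dif_pos hc, aux_phi b F Ft Qplus Qminus hF hFt hQplus hQminus hℓh hℓk hA]
      dsimp only
      rw [if_pos hP, ← Module.End.mul_apply F (F ^ (m : ℕ)), ← pow_succ']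
    · rw [dif_neg hc, map_zero, ← Module.End.mul_apply F (F ^ (m : ℕ)), ← pow_succ']
      rw [hpt]
      exact aux_O2 b F Ft Qminus hF hFt hQminus hℓk (by omega) _
  · rw [if_neg hP, map_zero]
    by_cases hc : (m : ℕ) + 1 < p i
    · rw [dif_pos hc, aux_phi b F Ft Qplus Qminus hF hFt hQplus hQminus hℓh hℓk hA]
      dsimp only
      rw [if_neg hP]
    · rw [dif_neg hc, map_zero]

include hF hFt hQplus hQminus in
theorem aux_pi {h k ℓ h' k' ℓ' : ℕ} (hℓh : ℓ ≤ h) (hℓk : ℓ ≤ k) (hℓh' : ℓ' ≤ h')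
    (hℓk' : ℓ' ≤ k') {A' : Module.End K V}
    (hA' : Qminus k' * A' * Qplus h' = A') :
    Qminus k * (F ^ ℓ) * phiMap F Ft ℓ' A' * Qplus h =
      if (h = h' ∧ k = k' ∧ ℓ = ℓ') then A' else 0 := by
  have hpt : ∀ y : V, A' y = Qminus k' (A' (Qplus h' y)) := by
    intro y
    conv_lhs => rw [← hA']
    rfl
  apply Module.Basis.ext b
  intro x
  obtain ⟨i, j, m⟩ := x
  simp only [Module.End.mul_apply]
  rw [apply_ite (fun g : Module.End K V => g (b ⟨i, j, m⟩)), LinearMap.zero_apply]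
  rw [hQplus]
  dsimp only
  by_cases hq : ((m : ℕ) = 0 ∧ p i = h + 1)
  · rw [if_pos hq, aux_phi b F Ft Qplus Qminus hF hFt hQplus hQminus hℓh' hℓk' hA']
    dsimp only
    by_cases hP' : p i = h' + 1
    · rw [if_pos hP', hq.1, pow_zero, Module.End.one_apply,
        hpt (b ⟨i, j, ⟨0, m.pos⟩⟩),
        aux_O1 b F Ft Qminus hF hFt hQminus hℓk']
      by_cases hc2 : (k = k' ∧ ℓ = ℓ')
      · rw [if_pos hc2, if_pos (⟨by omega, hc2.1, hc2.2⟩ : (h = h' ∧ k = k' ∧ ℓ = ℓ')), ← hpt]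
        congr 1
        exact (aux_bcongr b j m.isLt m.pos hq.1).symm
      · rw [if_neg hc2, if_neg (by rintro ⟨e1, e2, e3⟩; exact hc2 ⟨e2, e3⟩)]
    · rw [if_neg hP', map_zero, map_zero,
        if_neg (by rintro ⟨e1, e2, e3⟩; exact hP' (by omega))]
  · rw [if_neg hq, map_zero, map_zero, map_zero]
    by_cases hc3 : (h = h' ∧ k = k' ∧ ℓ = ℓ')
    · rw [if_pos hc3, hpt, hQplus]
      dsimp only
      rw [if_neg (by rintro ⟨e1, e2⟩; exact hq ⟨e1, by omega⟩), map_zero, map_zero]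
    · rw [if_neg hc3]

end Aux

/-- the centralizer `g^f` of the nilpotent `F` in `gl(V)` decomposes as the
direct sum `g^f = ⊕_{h,k=0}^{p₁-1} ⊕_{ℓ=0}^{min(h,k)} φ_ℓ(g₀^f(h,k))`: the family of
subspaces `φ_ℓ(g₀^f(h,k))` is independent and its supremum is `g^f`. -/
theorem stmt5 {K : Type*} [Field K] [CharZero K]
    {V : Type*} [AddCommGroup V] [Module K V]
    {s : ℕ} (hs : 0 < s) (p r : Fin s → ℕ) (hp : StrictAnti p)
    (hp0 : ∀ i, 0 < p i) (hr : ∀ i, 0 < r i)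
    (b : Module.Basis (PyramidBox p r) K V)
    (F Ft : Module.End K V) (Qplus Qminus : ℕ → Module.End K V)
    (hF : ∀ x : PyramidBox p r,
      F (b x) = if h : (x.2.2 : ℕ) + 1 < p x.1
        then b ⟨x.1, x.2.1, ⟨(x.2.2 : ℕ) + 1, h⟩⟩ else 0)
    (hFt : ∀ x : PyramidBox p r,
      Ft (b x) = if 0 < (x.2.2 : ℕ)
        then b ⟨x.1, x.2.1, ⟨(x.2.2 : ℕ) - 1, Nat.lt_of_le_of_lt (Nat.sub_le _ _) x.2.2.isLt⟩⟩
        else 0)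
    (hQplus : ∀ (n : ℕ) (x : PyramidBox p r),
      Qplus n (b x) = if ((x.2.2 : ℕ) = 0 ∧ p x.1 = n + 1) then b x else 0)
    (hQminus : ∀ (n : ℕ) (x : PyramidBox p r),
      Qminus n (b x) = if ((x.2.2 : ℕ) + 1 = p x.1 ∧ p x.1 = n + 1) then b x else 0) :
    (∀ t : {t : ℕ × ℕ × ℕ // t.1 < p ⟨0, hs⟩ ∧ t.2.1 < p ⟨0, hs⟩ ∧ t.2.2 ≤ min t.1 t.2.1},
      Disjoint
        (Submodule.map (phiMap F Ft t.1.2.2) (gfZeroPiece (Qminus t.1.2.1) (Qplus t.1.1)))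
        (⨆ u : {t : ℕ × ℕ × ℕ // t.1 < p ⟨0, hs⟩ ∧ t.2.1 < p ⟨0, hs⟩ ∧ t.2.2 ≤ min t.1 t.2.1},
          ⨆ _ : u ≠ t,
            Submodule.map (phiMap F Ft u.1.2.2) (gfZeroPiece (Qminus u.1.2.1) (Qplus u.1.1))))
    ∧ (⨆ t : {t : ℕ × ℕ × ℕ // t.1 < p ⟨0, hs⟩ ∧ t.2.1 < p ⟨0, hs⟩ ∧ t.2.2 ≤ min t.1 t.2.1},
        Submodule.map (phiMap F Ft t.1.2.2) (gfZeroPiece (Qminus t.1.2.1) (Qplus t.1.1)))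
      = LinearMap.ker (LinearMap.mulLeft K F - LinearMap.mulRight K F) := by
  classical
  have hmem : ∀ (h k : ℕ) (A : Module.End K V),
      A ∈ gfZeroPiece (Qminus k) (Qplus h) ↔ Qminus k * A * Qplus h = A := by
    intro h k A
    simp only [gfZeroPiece, LinearMap.mem_ker, LinearMap.sub_apply, LinearMap.comp_apply,
      LinearMap.mulLeft_apply, LinearMap.mulRight_apply, LinearMap.id_apply, sub_eq_zero,
      mul_assoc]
  constructor
  · rintro ⟨⟨h, k, ℓ⟩, hth, htk, htl⟩
    dsimp only at hth htk htl ⊢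
    have hℓh : ℓ ≤ h := le_trans htl (min_le_left _ _)
    have hℓk : ℓ ≤ k := le_trans htl (min_le_right _ _)
    set π : Module.End K V →ₗ[K] Module.End K V :=
      (phiMap F Ft ℓ).comp ((LinearMap.mulRight K (Qplus h)).comp
        (LinearMap.mulLeft K (Qminus k * (F ^ ℓ)))) with hπ
    have hπ_app : ∀ B : Module.End K V,
        π B = phiMap F Ft ℓ (Qminus k * (F ^ ℓ) * B * Qplus h) := fun B => rfl
    have hle : (⨆ u : {t : ℕ × ℕ × ℕ //
          t.1 < p ⟨0, hs⟩ ∧ t.2.1 < p ⟨0, hs⟩ ∧ t.2.2 ≤ min t.1 t.2.1},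
        ⨆ _ : u ≠ ⟨(h, k, ℓ), hth, htk, htl⟩,
          Submodule.map (phiMap F Ft u.1.2.2) (gfZeroPiece (Qminus u.1.2.1) (Qplus u.1.1)))
        ≤ LinearMap.ker π := by
      refine iSup_le fun u => iSup_le fun hu => ?_
      intro x hx
      obtain ⟨A'', hA'', rfl⟩ := hx
      obtain ⟨⟨h', k', ℓ'⟩, hu1, hu2, hu3⟩ := u
      dsimp only at hu1 hu2 hu3 ⊢
      have hA2 := (hmem h' k' A'').1 hA''
      rw [LinearMap.mem_ker, hπ_app,
        aux_pi b F Ft Qplus Qminus hF hFt hQplus hQminus hℓh hℓk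
          (le_trans hu3 (min_le_left _ _)) (le_trans hu3 (min_le_right _ _)) hA2,
        if_neg ?_, map_zero]
      rintro ⟨e1, e2, e3⟩
      subst e1; subst e2; subst e3
      exact hu rfl
    rw [Submodule.disjoint_def]
    intro x hx hx2
    obtain ⟨A, hA, rfl⟩ := hx
    have hA' := (hmem h k A).1 hA
    have h1 : π (phiMap F Ft ℓ A) = phiMap F Ft ℓ A := by
      rw [hπ_app,
        aux_pi b F Ft Qplus Qminus hF hFt hQplus hQminus hℓh hℓk hℓh hℓk hA',
        if_pos ⟨rfl, rfl, rfl⟩]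
    have h2 : π (phiMap F Ft ℓ A) = 0 := by
      have := hle hx2
      rwa [LinearMap.mem_ker] at this
    rw [← h1, h2]
  · have hproj : ∀ (B : Module.End K V) (h k ℓ : ℕ),
        Qminus k * (Qminus k * (F ^ ℓ) * B * Qplus h) * Qplus h =
          Qminus k * (F ^ ℓ) * B * Qplus h := by
      intro B h k ℓ
      have h1 := aux_QmQm b Qminus hQminus k
      have h2 := aux_QpQp b Qplus hQplus h
      simp only [mul_assoc]
      rw [h2, ← mul_assoc, h1]
    apply le_antisymm
    · refine iSup_le ?_
      rintro ⟨⟨h, k, ℓ⟩, hth, htk, htl⟩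
      dsimp only at hth htk htl ⊢
      intro x hx
      obtain ⟨A, hA, rfl⟩ := hx
      rw [LinearMap.mem_ker, LinearMap.sub_apply, LinearMap.mulLeft_apply,
        LinearMap.mulRight_apply, sub_eq_zero]
      exact aux_comm b F Ft Qplus Qminus hF hFt hQplus hQminus
        (le_trans htl (min_le_left _ _)) (le_trans htl (min_le_right _ _))
        ((hmem h k A).1 hA)
    · intro B hB
      rw [LinearMap.mem_ker, LinearMap.sub_apply, LinearMap.mulLeft_apply,
        LinearMap.mulRight_apply, sub_eq_zero] at hB
      have hC : Commute F B := hB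
      have hBpow : ∀ a : ℕ, (F ^ a) * B = B * (F ^ a) := fun a => (hC.pow_left a)
      have key : B = ∑ h ∈ Finset.range (p ⟨0, hs⟩), ∑ k ∈ Finset.range (p ⟨0, hs⟩),
          ∑ ℓ ∈ Finset.range (min h k + 1),
            phiMap F Ft ℓ (Qminus k * (F ^ ℓ) * B * Qplus h) := by
        apply Module.Basis.ext b
        intro x
        obtain ⟨i, j, m⟩ := x
        have hpm : p i ≤ p ⟨0, hs⟩ := hp.antitone (by simp [Fin.le_def])
        have h0 := hp0 i
        simp only [LinearMap.sum_apply]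
        have hterm : ∀ h ∈ Finset.range (p ⟨0, hs⟩), ∀ k ∈ Finset.range (p ⟨0, hs⟩),
            ∀ ℓ ∈ Finset.range (min h k + 1),
            phiMap F Ft ℓ (Qminus k * (F ^ ℓ) * B * Qplus h) (b ⟨i, j, m⟩) =
              if h = p i - 1 then
                (F ^ (m : ℕ)) ((Ft ^ ℓ) (Qminus k ((F ^ ℓ) (B (b ⟨i, j, ⟨0, m.pos⟩⟩)))))
              else 0 := by
          intro h hh k hk ℓ hℓ
          rw [Finset.mem_range] at hh hk hℓ
          rw [aux_phi b F Ft Qplus Qminus hF hFt hQplus hQminus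
            (by omega : ℓ ≤ h) (by omega : ℓ ≤ k) (hproj B h k ℓ)]
          dsimp only
          by_cases hP : p i = h + 1
          · rw [if_pos hP, if_pos (by omega)]
            simp only [Module.End.mul_apply]
            rw [hQplus]
            dsimp only
            rw [if_pos ⟨rfl, hP⟩]
          · rw [if_neg hP, if_neg (by omega)]
        rw [Finset.sum_congr rfl (fun h hh => Finset.sum_congr rfl
          (fun k hk => Finset.sum_congr rfl (hterm h hh k hk)))]
        rw [Finset.sum_eq_single (p i - 1)
          (fun h hh hne => by
            apply Finset.sum_eq_zero
            intro k hk
            apply Finset.sum_eq_zero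
            intro ℓ hℓ
            rw [if_neg hne])
          (fun hnot => absurd (Finset.mem_range.2 (by omega)) hnot)]
        rw [Finset.sum_congr rfl (fun k hk => Finset.sum_congr rfl
          (fun ℓ hℓ => if_pos rfl))]
        simp only [← map_sum]
        rw [aux_Ih b F Ft Qminus hF hFt hQminus hs hp hp0 (p i - 1) _ ?hv]
        case hv =>
          rw [show (p i - 1) + 1 = p i by omega, ← Module.End.mul_apply, hBpow,
            Module.End.mul_apply, aux_Fpow b F hF]
          dsimp only
          rw [dif_neg (by omega), map_zero]
        conv_rhs => rw [← Module.End.mul_apply, hBpow, Module.End.mul_apply,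
          aux_Fpow b F hF]
        dsimp only
        rw [dif_pos (by omega : 0 + (m : ℕ) < p i),
          aux_bcongr b j _ m.isLt (by omega : 0 + (m : ℕ) = (m : ℕ))]
      have hsum_mem : (∑ h ∈ Finset.range (p ⟨0, hs⟩), ∑ k ∈ Finset.range (p ⟨0, hs⟩),
          ∑ ℓ ∈ Finset.range (min h k + 1),
            phiMap F Ft ℓ (Qminus k * (F ^ ℓ) * B * Qplus h)) ∈
          (⨆ t : {t : ℕ × ℕ × ℕ //
              t.1 < p ⟨0, hs⟩ ∧ t.2.1 < p ⟨0, hs⟩ ∧ t.2.2 ≤ min t.1 t.2.1},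
            Submodule.map (phiMap F Ft t.1.2.2)
              (gfZeroPiece (Qminus t.1.2.1) (Qplus t.1.1))) := by
        apply Submodule.sum_mem
        intro h hh
        apply Submodule.sum_mem
        intro k hk
        apply Submodule.sum_mem
        intro ℓ hℓ
        rw [Finset.mem_range] at hh hk hℓ
        refine Submodule.mem_iSup_of_mem ⟨(h, k, ℓ), hh, hk, show ℓ ≤ min h k by omega⟩ ?_
        exact Submodule.mem_map_of_mem ((hmem h k _).2 (hproj B h k ℓ))
      rwa [← key] at hsum_mem
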